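/- Let 𝒩_d be a Pauli channel 𝒩_d(ρ) = Σ_{i=0}^3 p_i σ_i ρ σ_i with probability vector (p_0,p_1,p_2,p_3), and let R_AB = (1/2)𝒥[𝒩_d] be the PDM with maximally mixed initial state. Then the eigenvalues of R_AB are (1/2 − p_0, 1/2 − p_1, 1/2 − p_2, 1/2 − p_3). -/

import Mathlib

open Kronecker Matrix ComplexOrder

/-- Hermitian extension of the von Neumann entropy (base-2):
`S(X) = -Tr[X log₂|X|] = -∑ λᵢ log₂|λᵢ|` in terms of the eigenvalues of `X`. -/
noncomputable def hermEntropy {n : Type*} [Fintype n] [DecidableEq n]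
    {X : Matrix n n ℂ} (hX : X.IsHermitian) : ℝ :=
  -∑ i, hX.eigenvalues i * Real.logb 2 |hX.eigenvalues i|

/-- Jamiołkowski matrix `𝒥[𝒩] = ∑ᵢⱼ |i⟩⟨j| ⊗ 𝒩(|j⟩⟨i|)` of a map `𝒩`. -/
noncomputable def jam {n m : Type*} [Fintype n] [DecidableEq n]
    (𝒩 : Matrix n n ℂ → Matrix m m ℂ) : Matrix (n × m) (n × m) ℂ :=
  ∑ i : n, ∑ j : n, Matrix.single i j (1 : ℂ) ⊗ₖ 𝒩 (Matrix.single j i 1)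

/-- The pseudo-density matrix (spatiotemporal product)
`𝒩 ⋆ ρ = (1/2){ρ ⊗ 𝟙, 𝒥[𝒩]}`. -/
noncomputable def pdm {n m : Type*} [Fintype n] [DecidableEq n] [Fintype m] [DecidableEq m]
    (𝒩 : Matrix n n ℂ → Matrix m m ℂ) (ρ : Matrix n n ℂ) : Matrix (n × m) (n × m) ℂ :=
  (1 / 2 : ℂ) • ((ρ ⊗ₖ (1 : Matrix m m ℂ)) * jam 𝒩 + jam 𝒩 * (ρ ⊗ₖ (1 : Matrix m m ℂ)))

/-- The Pauli matrices `σ₀ = I, σ₁ = σx, σ₂ = σy, σ₃ = σz`. -/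
def pauli : Fin 4 → Matrix (Fin 2) (Fin 2) ℂ :=
  ![1, !![0, 1; 1, 0], !![0, -Complex.I; Complex.I, 0], !![1, 0; 0, -1]]

open Polynomial in
/-- The characteristic polynomial is invariant under conjugation. -/
lemma charpoly_conj' {n R : Type*} [Fintype n] [DecidableEq n] [CommRing R]
    (U A V : Matrix n n R) (hUV : U * V = 1) (hVU : V * U = 1) :
    (U * A * V).charpoly = A.charpoly := by
  have hscal : Matrix.scalar n (X : R[X]) =
      U.map C * Matrix.scalar n (X : R[X]) * V.map C := by
    rw [Matrix.scalar_apply, ← Matrix.smul_one_eq_diagonal, Matrix.mul_smul, mul_one,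
      Matrix.smul_mul, ← Matrix.map_mul, hUV, Matrix.map_one _ (map_zero C) (map_one C)]
  have hmat : charmatrix (U * A * V) = U.map C * charmatrix A * V.map C := by
    unfold charmatrix
    rw [Matrix.mul_sub, Matrix.sub_mul, ← hscal]
    congr 1
    simp [RingHom.mapMatrix_apply, Matrix.map_mul]
  unfold Matrix.charpoly
  rw [hmat, Matrix.det_mul, Matrix.det_mul, mul_comm, ← mul_assoc, ← Matrix.det_mul,
    ← Matrix.map_mul, hVU, Matrix.map_one _ (map_zero C) (map_one C), Matrix.det_one, one_mul]

open Polynomial in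
lemma charpoly_diagonal' {n R : Type*} [Fintype n] [DecidableEq n] [CommRing R] (d : n → R) :
    (Matrix.diagonal d).charpoly = ∏ i, (X - C (d i)) := by
  have h : charmatrix (Matrix.diagonal d) = Matrix.diagonal fun i => X - C (d i) := by
    ext i j
    by_cases h : i = j <;> simp [charmatrix_apply, Matrix.diagonal_apply, h]
  rw [Matrix.charpoly, h, Matrix.det_diagonal]

open Polynomial in
/-- The characteristic polynomial of a Hermitian matrix splits over its eigenvalues. -/
lemma charpoly_hermitian' {n : Type*} [Fintype n] [DecidableEq n] {A : Matrix n n ℂ}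
    (hA : A.IsHermitian) :
    A.charpoly = ∏ i, (X - C (hA.eigenvalues i : ℂ)) := by
  have h1 : (hA.eigenvectorUnitary : Matrix n n ℂ) *
      star (hA.eigenvectorUnitary : Matrix n n ℂ) = 1 :=
    Matrix.mem_unitaryGroup_iff.mp hA.eigenvectorUnitary.2
  have h2 : star (hA.eigenvectorUnitary : Matrix n n ℂ) *
      (hA.eigenvectorUnitary : Matrix n n ℂ) = 1 :=
    Matrix.mem_unitaryGroup_iff'.mp hA.eigenvectorUnitary.2
  calc A.charpoly
      = ((hA.eigenvectorUnitary : Matrix n n ℂ) * diagonal (RCLike.ofReal ∘ hA.eigenvalues) *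
          star (hA.eigenvectorUnitary : Matrix n n ℂ)).charpoly := by
        conv_lhs => rw [hA.spectral_theorem]
        rfl
    _ = (diagonal (RCLike.ofReal ∘ hA.eigenvalues)).charpoly := charpoly_conj' _ _ _ h1 h2
    _ = ∏ i, (X - C (hA.eigenvalues i : ℂ)) := by rw [charpoly_diagonal']; rfl

/-- The (rescaled) Bell-basis change-of-basis matrix diagonalizing a Pauli-channel PDM. -/
noncomputable def bellV : Matrix (Fin 2 × Fin 2) (Fin 2 × Fin 2) ℂ := fun x y =>
  ![![![![(0:ℂ),1],![1,0]], ![![1,0],![0,1]]], ![![![-1,0],![0,1]], ![![0,-1],![1,0]]]]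
    x.1 x.2 y.1 y.2

/-- The inverse of `bellV`. -/
noncomputable def bellW : Matrix (Fin 2 × Fin 2) (Fin 2 × Fin 2) ℂ := fun x y =>
  (1/2 : ℂ) * bellV y x

/-- The eigenvalue table. -/
noncomputable def dvec (p : Fin 4 → ℝ) : Fin 2 × Fin 2 → ℝ := fun x =>
  ![![1/2 - p 0, 1/2 - p 1], ![1/2 - p 2, 1/2 - p 3]] x.1 x.2

set_option maxHeartbeats 2000000 in
lemma bellVW : bellV * bellW = 1 := by
  ext ⟨a, b⟩ ⟨c, d⟩
  fin_cases a <;> fin_cases b <;> fin_cases c <;> fin_cases d <;>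
    simp [bellV, bellW, Matrix.mul_apply, Fintype.sum_prod_type, Fin.sum_univ_two,
      Matrix.one_apply] <;>
    norm_num [Prod.ext_iff]

set_option maxHeartbeats 2000000 in
lemma bellWV : bellW * bellV = 1 := by
  ext ⟨a, b⟩ ⟨c, d⟩
  fin_cases a <;> fin_cases b <;> fin_cases c <;> fin_cases d <;>
    simp [bellV, bellW, Matrix.mul_apply, Fintype.sum_prod_type, Fin.sum_univ_two,
      Matrix.one_apply] <;>
    norm_num [Prod.ext_iff]

set_option maxHeartbeats 4000000 in
lemma Rfact (p : Fin 4 → ℝ) (hp1 : ∑ i, p i = 1) :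
    ((1 / 2 : ℂ) • jam (fun X => ∑ i, (p i : ℂ) • (pauli i * X * pauli i))) =
      bellV * Matrix.diagonal (fun x => ((dvec p x : ℝ) : ℂ)) * bellW := by
  have h0 : (p 0 : ℂ) = 1 - p 1 - p 2 - p 3 := by
    have h1 := hp1
    rw [Fin.sum_univ_four] at h1
    have h : p 0 = 1 - p 1 - p 2 - p 3 := by linarith
    rw [h]
    push_cast
    ring
  ext ⟨a, b⟩ ⟨c, d⟩
  fin_cases a <;> fin_cases b <;> fin_cases c <;> fin_cases d <;>
    simp [jam, dvec, bellV, bellW, Matrix.sum_apply, Matrix.mul_apply, Fintype.sum_prod_type,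
      Fin.sum_univ_two, Fin.sum_univ_four, pauli, Matrix.single, Matrix.one_apply,
      Matrix.vecHead, Matrix.vecTail, Matrix.diagonal_apply, Prod.ext_iff, h0] <;>
    ring_nf

open Polynomial in
lemma roots_prod_aux (f : (Fin 2 × Fin 2) → ℂ) :
    (∏ i, (X - C (f i))).roots = Finset.univ.val.map f := by
  rw [Finset.prod_eq_multiset_prod]
  have h : Multiset.map (fun i => X - C (f i)) Finset.univ.val =
      Multiset.map (fun a => X - C a) (Multiset.map f Finset.univ.val) := by
    rw [Multiset.map_map]; rfl
  rw [h, Polynomial.roots_multiset_prod_X_sub_C]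

/-- For a Pauli channel `𝒩_d(ρ) = ∑ pᵢ σᵢ ρ σᵢ` and maximally mixed initial state,
the PDM `R = (1/2)𝒥[𝒩_d]` has eigenvalues `(1/2 − p₀, 1/2 − p₁, 1/2 − p₂, 1/2 − p₃)`. -/
theorem pdm_pauli_channel_spectrum (p : Fin 4 → ℝ)
    (hp0 : ∀ i, 0 ≤ p i) (hp1 : ∑ i, p i = 1)
    (hR : ((1 / 2 : ℂ) •
        jam (fun X => ∑ i, (p i : ℂ) • (pauli i * X * pauli i))).IsHermitian) :
    Multiset.map hR.eigenvalues Finset.univ.val =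
      {1 / 2 - p 0, 1 / 2 - p 1, 1 / 2 - p 2, 1 / 2 - p 3} := by
  have hcp1 := charpoly_hermitian' hR
  have hcp2 : ((1 / 2 : ℂ) •
      jam (fun X => ∑ i, (p i : ℂ) • (pauli i * X * pauli i))).charpoly =
      ∏ x, (Polynomial.X - Polynomial.C ((dvec p x : ℝ) : ℂ)) := by
    rw [Rfact p hp1, charpoly_conj' _ _ _ bellVW bellWV, charpoly_diagonal']
  have hroots := congrArg Polynomial.roots (hcp1.symm.trans hcp2)
  rw [roots_prod_aux, roots_prod_aux] at hroots
  have hmaps : Multiset.map (fun i => (hR.eigenvalues i : ℂ)) Finset.univ.val =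
      Multiset.map (fun x => ((dvec p x : ℝ) : ℂ)) Finset.univ.val := hroots
  have hinj : Multiset.map hR.eigenvalues Finset.univ.val =
      Multiset.map (dvec p) Finset.univ.val := by
    apply Multiset.map_injective (f := (Complex.ofReal : ℝ → ℂ)) Complex.ofReal_injective
    rwa [Multiset.map_map, Multiset.map_map]
  rw [hinj]
  have huniv : (Finset.univ.val : Multiset (Fin 2 × Fin 2)) =
      {((0 : Fin 2), (0 : Fin 2)), (0, 1), (1, 0), (1, 1)} := by decide
  rw [huniv]
  simp [dvec]
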